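/- Every planar graph G on n ≥ 1 vertices contains an independent set I of size at least n/8 such that every vertex of I has degree less than 12 in G. -/

import Mathlib

set_option linter.unusedSectionVars false
set_option linter.unusedVariables false


/-- `H` is a minor of `G`. -/
def IsMinor {W V : Type*} (H : SimpleGraph W) (G : SimpleGraph V) : Prop :=
  ∃ f : W → Set V,
    (∀ w, (f w).Nonempty) ∧
    (∀ w, (G.induce (f w)).Connected) ∧
    (Pairwise fun w w' => Disjoint (f w) (f w')) ∧
    (∀ w w', H.Adj w w' → ∃ a ∈ f w, ∃ b ∈ f w', G.Adj a b)

/-- A graph is planar iff it has no `K₅` and no `K₃,₃` minor (Wagner's theorem). -/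
def IsPlanar {V : Type*} (G : SimpleGraph V) : Prop :=
  ¬ IsMinor (⊤ : SimpleGraph (Fin 5)) G ∧
  ¬ IsMinor (completeBipartiteGraph (Fin 3) (Fin 3)) G

open SimpleGraph

section Push
universe u v'
variable {V : Type u} {V' : Type v'} {W : Type*}

/-- Push a minor forward along an injective map that sends edges to edges. -/
lemma IsMinor.push {H : SimpleGraph W} {G' : SimpleGraph V'} {G : SimpleGraph V}
    (φ : V' → V) (hinj : Function.Injective φ)
    (hadj : ∀ a b, G'.Adj a b → G.Adj (φ a) (φ b)) :
    IsMinor H G' → IsMinor H G := by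
  rintro ⟨f, hne, hconn, hdisj, hedge⟩
  refine ⟨fun w => φ '' f w, fun w => (hne w).image φ, fun w => ?_, ?_, ?_⟩
  · -- connectivity via surjective hom
    have hc := hconn w
    let ψ : (G'.induce (f w)) →g (G.induce (φ '' f w)) :=
      { toFun := fun a => ⟨φ a.1, ⟨a.1, a.2, rfl⟩⟩
        map_rel' := by
          rintro ⟨a, ha⟩ ⟨b, hb⟩ hab
          exact hadj a b hab }
    have hsurj : Function.Surjective ψ := by
      rintro ⟨y, ⟨x, hx, rfl⟩⟩
      exact ⟨⟨x, hx⟩, rfl⟩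
    exact hc.map ψ hsurj
  · intro w w' hww
    exact Set.disjoint_image_of_injective hinj (hdisj hww)
  · intro w w' h
    obtain ⟨a, ha, b, hb, hab⟩ := hedge w w' h
    exact ⟨φ a, ⟨a, ha, rfl⟩, φ b, ⟨b, hb, rfl⟩, hadj a b hab⟩

lemma connected_induce_singleton (G : SimpleGraph V) (a : V) :
    (G.induce ({a} : Set V)).Connected := by
  rw [connected_iff]
  refine ⟨fun x y => ?_, ⟨⟨a, rfl⟩⟩⟩
  have hx : x = ⟨a, rfl⟩ := Subtype.ext x.2
  have hy : y = ⟨a, rfl⟩ := Subtype.ext y.2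
  rw [hx, hy]

/-- A `K₅` minor from 5 pairwise-adjacent distinct vertices. -/
lemma cliqueMinor {G : SimpleGraph V} (g : Fin 5 → V) (hinj : Function.Injective g)
    (hadj : ∀ i j, i ≠ j → G.Adj (g i) (g j)) :
    IsMinor (⊤ : SimpleGraph (Fin 5)) G := by
  refine ⟨fun i => {g i}, fun i => ⟨g i, rfl⟩, fun i => connected_induce_singleton G (g i),
    ?_, ?_⟩
  · intro i j hij
    simp only [Set.disjoint_singleton_left, Set.mem_singleton_iff]
    exact fun h => hij (hinj h)
  · intro i j hij
    exact ⟨g i, rfl, g j, rfl, hadj i j (by simpa using hij)⟩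

end Push


universe u
section Main
variable {V : Type u}

/-- Sum of neighborhood sizes (= twice edge count), instance-free. -/
noncomputable def DD [Fintype V] (G : SimpleGraph V) : ℕ :=
  ∑ v, (G.neighborSet v).ncard

/-- The finset of ordered adjacent pairs. -/
noncomputable def PP [Fintype V] (G : SimpleGraph V) : Finset (V × V) := by
  classical exact Finset.univ.filter (fun p => G.Adj p.1 p.2)

lemma mem_PP [Fintype V] {G : SimpleGraph V} {p : V × V} :
    p ∈ PP G ↔ G.Adj p.1 p.2 := by
  classical
  simp [PP]

lemma DD_eq_card_PP [Fintype V] (G : SimpleGraph V) : DD G = (PP G).card := by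
  classical
  rw [Finset.card_eq_sum_card_fiberwise (f := Prod.fst) (t := Finset.univ)
    (fun x _ => Finset.mem_univ _)]
  unfold DD
  refine Finset.sum_congr rfl fun v _ => ?_
  rw [Set.ncard_eq_toFinset_card']
  refine (Finset.card_bij (fun p _ => p.2) ?_ ?_ ?_).symm.trans rfl
  · rintro ⟨a, b⟩ hp
    simp only [Finset.mem_filter, mem_PP] at hp
    simp only [Set.mem_toFinset, mem_neighborSet]
    rw [← hp.2]; exact hp.1
  · rintro ⟨a, b⟩ ha ⟨c, d⟩ hc h
    simp only [Finset.mem_filter, mem_PP] at ha hc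
    simp only at h
    simp [Prod.ext_iff, h, ha.2, hc.2]
  · intro b hb
    simp only [Set.mem_toFinset, mem_neighborSet] at hb
    exact ⟨(v, b), by simp [Finset.mem_filter, mem_PP, hb], rfl⟩

/-- Contract `u` into `v` (they should be adjacent): delete `u`, and let `v`
inherit all of `u`'s edges. -/
def contractG (G : SimpleGraph V) (u v : V) : SimpleGraph {x : V // x ≠ u} where
  Adj a b := a ≠ b ∧ (G.Adj a.1 b.1 ∨ (a.1 = v ∧ G.Adj u b.1) ∨ (b.1 = v ∧ G.Adj a.1 u))
  symm := by
    refine ⟨?_⟩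
    rintro a b ⟨hab, h⟩
    refine ⟨hab.symm, ?_⟩
    rcases h with h | ⟨h1, h2⟩ | ⟨h1, h2⟩
    · exact Or.inl h.symm
    · exact Or.inr (Or.inr ⟨h1, h2.symm⟩)
    · exact Or.inr (Or.inl ⟨h1, h2.symm⟩)
  loopless := ⟨fun a h => h.1 rfl⟩

variable {G : SimpleGraph V} {u v : V}

lemma contractG_adj {a b : {x : V // x ≠ u}} :
    (contractG G u v).Adj a b ↔
      a ≠ b ∧ (G.Adj a.1 b.1 ∨ (a.1 = v ∧ G.Adj u b.1) ∨ (b.1 = v ∧ G.Adj a.1 u)) :=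
  Iff.rfl

section Count
variable [Fintype V] [DecidableEq V]

lemma contract_shape {a b : {x : V // x ≠ u}} (h : (contractG G u v).Adj a b)
    (h1 : ¬ G.Adj a.1 b.1) (h2 : a.1 ≠ v) : b.1 = v ∧ G.Adj a.1 u := by
  rcases h.2 with h' | ⟨h3, _⟩ | ⟨h3, h4⟩
  · exact absurd h' h1
  · exact absurd h3 h2
  · exact ⟨h3, h4⟩

lemma DD_contract_le (huv : G.Adj u v) : DD (contractG G u v) ≤ DD G := by
  classical
  rw [DD_eq_card_PP, DD_eq_card_PP]
  apply Finset.card_le_card_of_injOn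
    (fun q => if G.Adj q.1.1 q.2.1 then (q.1.1, q.2.1)
      else if q.1.1 = v then (u, q.2.1) else (q.1.1, u))
  · rintro ⟨a, b⟩ hq
    simp only [Finset.mem_coe] at hq ⊢
    rw [mem_PP] at hq
    by_cases h1 : G.Adj a.1 b.1
    · rw [if_pos h1, mem_PP]; exact h1
    · by_cases h2 : a.1 = v
      · rcases hq.2 with h' | ⟨_, h3⟩ | ⟨h3, h4⟩
        · exact absurd h' h1
        · rw [if_neg h1, if_pos h2, mem_PP]; exact h3
        · rw [if_neg h1, if_pos h2, mem_PP]
          have : a.1 = b.1 := h2.trans h3.symm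
          exact absurd (Subtype.ext this) hq.1
      · obtain ⟨h3, h4⟩ := contract_shape hq h1 h2
        rw [if_neg h1, if_neg h2, mem_PP]; exact h4
  · rintro ⟨a, b⟩ hq ⟨a', b'⟩ hq' heq
    simp only [Finset.mem_coe, mem_PP] at hq hq'
    simp only at heq
    have hau : a.1 ≠ u := a.2
    have hau' : a'.1 ≠ u := a'.2
    have hbu : b.1 ≠ u := b.2
    have hbu' : b'.1 ≠ u := b'.2
    by_cases h1 : G.Adj a.1 b.1 <;> by_cases h1' : G.Adj a'.1 b'.1
    · rw [if_pos h1, if_pos h1', Prod.mk.injEq] at heq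
      exact Prod.ext (Subtype.ext heq.1) (Subtype.ext heq.2)
    · rw [if_pos h1, if_neg h1'] at heq
      by_cases h2' : a'.1 = v
      · rw [if_pos h2', Prod.mk.injEq] at heq
        exact absurd heq.1 hau
      · rw [if_neg h2', Prod.mk.injEq] at heq
        exact absurd heq.2 hbu
    · rw [if_neg h1, if_pos h1'] at heq
      by_cases h2 : a.1 = v
      · rw [if_pos h2, Prod.mk.injEq] at heq
        exact absurd heq.1.symm hau'
      · rw [if_neg h2, Prod.mk.injEq] at heq
        exact absurd heq.2.symm hbu'
    · rw [if_neg h1, if_neg h1'] at heq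
      by_cases h2 : a.1 = v <;> by_cases h2' : a'.1 = v
      · rw [if_pos h2, if_pos h2', Prod.mk.injEq] at heq
        exact Prod.ext (Subtype.ext (h2.trans h2'.symm)) (Subtype.ext heq.2)
      · rw [if_pos h2, if_neg h2', Prod.mk.injEq] at heq
        exact absurd heq.1.symm hau'
      · rw [if_neg h2, if_pos h2', Prod.mk.injEq] at heq
        exact absurd heq.1 hau
      · rw [if_neg h2, if_neg h2', Prod.mk.injEq] at heq
        obtain ⟨hb2, _⟩ := contract_shape hq h1 h2
        obtain ⟨hb2', _⟩ := contract_shape hq' h1' h2'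
        exact Prod.ext (Subtype.ext heq.1) (Subtype.ext (hb2.trans hb2'.symm))

lemma DD_contract_ge (huv : G.Adj u v) :
    DD G ≤ DD (contractG G u v) + (2 + 2 * (G.neighborSet u ∩ G.neighborSet v).ncard) := by
  classical
  have hvu : v ≠ u := huv.ne'
  set vv : {x : V // x ≠ u} := (⟨v, hvu⟩ : {x : V // x ≠ u}) with hvvdef
  set C : Finset V := (G.neighborSet u ∩ G.neighborSet v).toFinset with hCdef
  have hCcard : (G.neighborSet u ∩ G.neighborSet v).ncard = C.card := by
    rw [hCdef, Set.ncard_eq_toFinset_card']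
  set B : Finset (V × V) :=
    ({(u, v), (v, u)} : Finset (V × V)) ∪ C.image (fun b => (u, b)) ∪ C.image (fun b => (b, u))
    with hBdef
  have hBcard : B.card ≤ 2 + 2 * C.card := by
    calc B.card ≤ (({(u, v), (v, u)} : Finset (V × V)) ∪ C.image (fun b => (u, b))).card
        + (C.image (fun b => (b, u))).card := Finset.card_union_le _ _
      _ ≤ (({(u, v), (v, u)} : Finset (V × V)).card + (C.image (fun b => (u, b))).card)
        + (C.image (fun b => (b, u))).card := by
          exact Nat.add_le_add_right (Finset.card_union_le _ _) _
      _ ≤ (2 + C.card) + C.card := by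
          refine Nat.add_le_add (Nat.add_le_add ?_ (Finset.card_image_le)) Finset.card_image_le
          exact Finset.card_insert_le _ _ |>.trans (by simp)
      _ ≤ 2 + 2 * C.card := by omega
  have hmain : (PP G \ B).card ≤ (PP (contractG G u v)).card := by
    apply Finset.card_le_card_of_injOn
      (fun p => ((if h : p.1 = u then vv else ⟨p.1, h⟩), (if h : p.2 = u then vv else ⟨p.2, h⟩)))
    · rintro ⟨a, b⟩ hp
      simp only [Finset.mem_coe] at hp ⊢
      rw [Finset.mem_sdiff, mem_PP] at hp
      obtain ⟨hadj, hnB⟩ := hp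
      simp only [hBdef, Finset.mem_union, Finset.mem_insert, Finset.mem_singleton,
        Finset.mem_image, not_or, not_exists] at hnB
      rw [mem_PP]
      by_cases ha : a = u <;> by_cases hb : b = u
      · exact absurd (ha.trans hb.symm) hadj.ne
      · -- a = u, b ≠ u : image (vv, b)
        rw [dif_pos ha, dif_neg hb]
        subst ha
        have hbv : b ≠ v := by
          intro h; exact hnB.1.1.1 (by rw [h])
        refine ⟨?_, Or.inr (Or.inl ⟨rfl, hadj⟩)⟩
        intro h
        exact hbv ((congrArg Subtype.val h).symm.trans rfl)
      · rw [dif_neg ha, dif_pos hb]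
        subst hb
        have hav : a ≠ v := by
          intro h; exact hnB.1.1.2 (by rw [h])
        refine ⟨?_, Or.inr (Or.inr ⟨rfl, hadj⟩)⟩
        intro h
        exact hav (congrArg Subtype.val h)
      · rw [dif_neg ha, dif_neg hb]
        exact ⟨fun h => hadj.ne (congrArg Subtype.val h), Or.inl hadj⟩
    · rintro ⟨a, b⟩ hp ⟨a', b'⟩ hp' heq
      simp only [Finset.mem_coe, Finset.mem_sdiff, mem_PP] at hp hp'
      obtain ⟨hadj, hnB⟩ := hp
      obtain ⟨hadj', hnB'⟩ := hp'
      simp only [hBdef, Finset.mem_union, Finset.mem_insert, Finset.mem_singleton,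
        Finset.mem_image, not_or, not_exists] at hnB hnB'
      simp only [Prod.mk.injEq] at heq
      obtain ⟨e1, e2⟩ := heq
      have memC : ∀ x, G.Adj u x → G.Adj v x → x ∈ C := by
        intro x h1 h2
        rw [hCdef, Set.mem_toFinset]
        exact ⟨h1, h2⟩
      have resolve : ∀ x x' : V,
          (if h : x = u then vv else ⟨x, h⟩) = (if h : x' = u then vv else ⟨x', h⟩) →
          x = x' ∨ (x = u ∧ x' = v) ∨ (x = v ∧ x' = u) := by
        intro x x' h
        by_cases hx : x = u <;> by_cases hx' : x' = u
        · exact Or.inl (hx.trans hx'.symm)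
        · rw [dif_pos hx, dif_neg hx'] at h
          have : v = x' := congrArg Subtype.val h
          exact Or.inr (Or.inl ⟨hx, this.symm⟩)
        · rw [dif_neg hx, dif_pos hx'] at h
          have : x = v := congrArg Subtype.val h
          exact Or.inr (Or.inr ⟨this, hx'⟩)
        · rw [dif_neg hx, dif_neg hx'] at h
          exact Or.inl (congrArg Subtype.val h)
      rcases resolve a a' e1 with r1 | ⟨ra, ra'⟩ | ⟨ra, ra'⟩
      · rcases resolve b b' e2 with r2 | ⟨rb, rb'⟩ | ⟨rb, rb'⟩
        · exact Prod.ext r1 r2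
        · subst rb; subst rb'; subst r1
          exact absurd ⟨memC a hadj.symm hadj'.symm, rfl⟩ (hnB.2 a)
        · subst rb; subst rb'; subst r1
          exact absurd ⟨memC a hadj'.symm hadj.symm, rfl⟩ (hnB'.2 a)
      · subst ra; subst ra'
        rcases resolve b b' e2 with r2 | ⟨rb, rb'⟩ | ⟨rb, rb'⟩
        · subst r2
          exact absurd ⟨memC b hadj hadj', rfl⟩ (hnB.1.2 b)
        · subst rb; subst rb'
          exact absurd rfl hadj.ne
        · subst rb; subst rb'
          exact absurd rfl hnB.1.1.1
      · subst ra; subst ra'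
        rcases resolve b b' e2 with r2 | ⟨rb, rb'⟩ | ⟨rb, rb'⟩
        · subst r2
          exact absurd ⟨memC b hadj' hadj, rfl⟩ (hnB'.1.2 b)
        · subst rb; subst rb'
          exact absurd rfl hnB.1.1.2
        · subst rb; subst rb'
          exact absurd rfl hadj'.ne
  calc DD G = (PP G).card := DD_eq_card_PP G
    _ ≤ (PP G \ B).card + B.card := Finset.card_le_card_sdiff_add_card
    _ ≤ (PP (contractG G u v)).card + (2 + 2 * C.card) := Nat.add_le_add hmain hBcard
    _ = DD (contractG G u v) + (2 + 2 * (G.neighborSet u ∩ G.neighborSet v).ncard) := by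
        rw [DD_eq_card_PP, hCcard]
end Count

section Lift
variable {W : Type*} {H : SimpleGraph W}

/-- Lift a minor through an edge contraction. -/
lemma contract_lift (huv : G.Adj u v) :
    IsMinor H (contractG G u v) → IsMinor H G := by
  rintro ⟨f, hne, hconn, hdisj, hedge⟩
  have hvu : v ≠ u := huv.ne'
  set vv : {x : V // x ≠ u} := (⟨v, hvu⟩ : {x : V // x ≠ u}) with hvvdef
  let T : Set {x : V // x ≠ u} → Set V :=
    fun S => (Subtype.val '' S) ∪ {x | x = u ∧ vv ∈ S}
  have hvalT : ∀ S (a : {x : V // x ≠ u}), a ∈ S → a.1 ∈ T S :=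
    fun S a ha => Or.inl ⟨a, ha, rfl⟩
  have huT : ∀ S, vv ∈ S → u ∈ T S := fun S h => Or.inr ⟨rfl, h⟩
  -- the key connectivity transfer
  have hconnT : ∀ S, ((contractG G u v).induce S).Connected → (G.induce (T S)).Connected := by
    intro S hS
    have hSne : S.Nonempty := by
      obtain ⟨⟨a, ha⟩⟩ := hS.nonempty
      exact ⟨a, ha⟩
    have step : ∀ (a b : {x : V // x ≠ u}) (haS : a ∈ S) (hbS : b ∈ S),
        (contractG G u v).Adj a b →
        (G.induce (T S)).Reachable ⟨a.1, hvalT S a haS⟩ ⟨b.1, hvalT S b hbS⟩ := by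
      rintro ⟨a, hau⟩ ⟨b, hbu⟩ haS hbS ⟨hab, h⟩
      rcases h with h | ⟨h1, h2⟩ | ⟨h1, h2⟩
      · exact Adj.reachable (by exact h)
      · -- a = v and G.Adj u b
        have hvvS : vv ∈ S := by
          have : (⟨a, hau⟩ : {x : V // x ≠ u}) = vv := Subtype.ext h1
          rwa [this] at haS
        have hu : u ∈ T S := huT S hvvS
        have r1 : (G.induce (T S)).Reachable ⟨a, hvalT S _ haS⟩ ⟨u, hu⟩ :=
          Adj.reachable (by have h1' : a = v := h1; show G.Adj a u; rw [h1']; exact huv.symm)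
        have r2 : (G.induce (T S)).Reachable ⟨u, hu⟩ ⟨b, hvalT S _ hbS⟩ :=
          Adj.reachable (by show G.Adj u b; exact h2)
        exact r1.trans r2
      · have hvvS : vv ∈ S := by
          have : (⟨b, hbu⟩ : {x : V // x ≠ u}) = vv := Subtype.ext h1
          rwa [this] at hbS
        have hu : u ∈ T S := huT S hvvS
        have r1 : (G.induce (T S)).Reachable ⟨a, hvalT S _ haS⟩ ⟨u, hu⟩ :=
          Adj.reachable (by show G.Adj a u; exact h2)
        have r2 : (G.induce (T S)).Reachable ⟨u, hu⟩ ⟨b, hvalT S _ hbS⟩ :=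
          Adj.reachable (by have h1' : b = v := h1; show G.Adj u b; rw [h1']; exact huv)
        exact r1.trans r2
    have walk : ∀ (x y : ↥S), (G.induce (T S)).Reachable
        ⟨x.1.1, hvalT S x.1 x.2⟩ ⟨y.1.1, hvalT S y.1 y.2⟩ := by
      intro x y
      have hxy := hS.preconnected x y
      obtain ⟨p⟩ := hxy
      induction p with
      | nil => exact Reachable.refl _
      | @cons x' c' y' h p ih =>
        exact Reachable.trans (step x'.1 c'.1 x'.2 c'.2 h) ih
    -- reduce arbitrary elements of T S to S-representatives
    have hrep : ∀ (z : V) (hz : z ∈ T S), ∃ a : ↥S,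
        (G.induce (T S)).Reachable ⟨z, hz⟩ ⟨a.1.1, hvalT S a.1 a.2⟩ := by
      intro z hz
      rcases hz with ⟨a', ha'S, rfl⟩ | ⟨hzu, hvvS⟩
      · exact ⟨⟨a', ha'S⟩, Reachable.refl _⟩
      · refine ⟨⟨vv, hvvS⟩, Adj.reachable ?_⟩
        show G.Adj z v
        rw [hzu]; exact huv
    rw [connected_iff]
    constructor
    · rintro ⟨z, hz⟩ ⟨z', hz'⟩
      obtain ⟨a, hra⟩ := hrep z hz
      obtain ⟨a', hra'⟩ := hrep z' hz'
      exact (hra.trans (walk a a')).trans hra'.symm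
    · obtain ⟨a, ha⟩ := hSne
      exact ⟨⟨a.1, hvalT S a ha⟩⟩
  refine ⟨fun w => T (f w), fun w => ?_, fun w => hconnT (f w) (hconn w), ?_, ?_⟩
  · obtain ⟨a, ha⟩ := hne w
    exact ⟨a.1, hvalT (f w) a ha⟩
  · intro w w' hww
    have hd : Disjoint (f w) (f w') := hdisj hww
    rw [Set.disjoint_left] at hd
    show Disjoint (T (f w)) (T (f w'))
    rw [Set.disjoint_left]
    rintro z (⟨a, haS, rfl⟩ | ⟨rfl, hvvS⟩)
    · rintro (⟨b, hbS, hz⟩ | ⟨hzu, hvvS'⟩)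
      · have : a = b := Subtype.ext hz.symm
        exact hd haS (this ▸ hbS)
      · exact a.2 hzu
    · rintro (⟨b, hbS, hz⟩ | ⟨_, hvvS'⟩)
      · exact b.2 hz
      · exact hd hvvS hvvS'
  · intro w w' hww
    obtain ⟨a, ha, b, hb, hab⟩ := hedge w w' hww
    obtain ⟨hne', h⟩ := hab
    rcases h with h | ⟨h1, h2⟩ | ⟨h1, h2⟩
    · exact ⟨a.1, hvalT (f w) a ha, b.1, hvalT (f w') b hb, h⟩
    · have hvvS : vv ∈ f w := by
        have : a = vv := Subtype.ext h1
        rwa [this] at ha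
      exact ⟨u, huT (f w) hvvS, b.1, hvalT (f w') b hb, h2⟩
    · have hvvS : vv ∈ f w' := by
        have : b = vv := Subtype.ext h1
        rwa [this] at hb
      exact ⟨a.1, hvalT (f w) a ha, u, huT (f w') hvvS, h2⟩
end Lift

section Delete
variable [Fintype V] [DecidableEq V] (G : SimpleGraph V)

/-- Delete a vertex. -/
def deleteV (v₀ : V) : SimpleGraph {x : V // x ≠ v₀} := G.comap Subtype.val

variable {G}

lemma deleteV_adj {v₀ : V} {a b : {x : V // x ≠ v₀}} :
    (deleteV G v₀).Adj a b ↔ G.Adj a.1 b.1 := Iff.rfl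

lemma deleteV_minor {v₀ : V} {W : Type*} {H : SimpleGraph W} :
    IsMinor H (deleteV G v₀) → IsMinor H G :=
  IsMinor.push Subtype.val Subtype.val_injective (fun _ _ h => h)

lemma DD_deleteV_le {v₀ : V} : DD (deleteV G v₀) ≤ DD G := by
  classical
  rw [DD_eq_card_PP, DD_eq_card_PP]
  apply Finset.card_le_card_of_injOn (fun q => (q.1.1, q.2.1))
  · rintro ⟨a, b⟩ hq
    simp only [Finset.mem_coe] at hq ⊢
    rw [mem_PP] at hq ⊢
    exact hq
  · rintro ⟨a, b⟩ _ ⟨a', b'⟩ _ heq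
    simp only [Prod.mk.injEq] at heq
    exact Prod.ext (Subtype.ext heq.1) (Subtype.ext heq.2)

lemma DD_deleteV_ge {v₀ w₀ : V} (hw : w₀ ≠ v₀) :
    DD G ≤ DD (deleteV G v₀) + 2 * (G.neighborSet v₀).ncard := by
  classical
  set N : Finset V := (G.neighborSet v₀).toFinset with hNdef
  have hNcard : (G.neighborSet v₀).ncard = N.card := by
    rw [hNdef, Set.ncard_eq_toFinset_card']
  set B : Finset (V × V) := N.image (fun b => (v₀, b)) ∪ N.image (fun b => (b, v₀)) with hBdef
  have hBcard : B.card ≤ 2 * N.card := by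
    calc B.card ≤ (N.image (fun b => (v₀, b))).card + (N.image (fun b => (b, v₀))).card :=
        Finset.card_union_le _ _
      _ ≤ N.card + N.card := Nat.add_le_add Finset.card_image_le Finset.card_image_le
      _ = 2 * N.card := by omega
  have hmain : (PP G \ B).card ≤ (PP (deleteV G v₀)).card := by
    apply Finset.card_le_card_of_injOn
      (fun p => ((if h : p.1 = v₀ then ⟨w₀, hw⟩ else ⟨p.1, h⟩ : {x : V // x ≠ v₀}),
        (if h : p.2 = v₀ then ⟨w₀, hw⟩ else ⟨p.2, h⟩ : {x : V // x ≠ v₀})))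
    · rintro ⟨a, b⟩ hp
      simp only [Finset.mem_coe] at hp ⊢
      rw [Finset.mem_sdiff, mem_PP] at hp
      obtain ⟨hadj, hnB⟩ := hp
      simp only [hBdef, Finset.mem_union, Finset.mem_image, not_or, not_exists] at hnB
      have ha : a ≠ v₀ := by
        intro h
        exact hnB.1 b ⟨by rw [hNdef, Set.mem_toFinset]; exact h ▸ hadj, by rw [h]⟩
      have hb : b ≠ v₀ := by
        intro h
        exact hnB.2 a ⟨by rw [hNdef, Set.mem_toFinset]; exact (h ▸ hadj.symm : G.Adj v₀ a), by rw [h]⟩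
      rw [mem_PP]
      rw [dif_neg ha, dif_neg hb]
      exact hadj
    · rintro ⟨a, b⟩ hp ⟨a', b'⟩ hp' heq
      simp only [Finset.mem_coe, Finset.mem_sdiff, mem_PP] at hp hp'
      obtain ⟨hadj, hnB⟩ := hp
      obtain ⟨hadj', hnB'⟩ := hp'
      simp only [hBdef, Finset.mem_union, Finset.mem_image, not_or, not_exists] at hnB hnB'
      have ha : a ≠ v₀ := by
        intro h
        exact hnB.1 b ⟨by rw [hNdef, Set.mem_toFinset]; exact h ▸ hadj, by rw [h]⟩
      have hb : b ≠ v₀ := by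
        intro h
        exact hnB.2 a ⟨by rw [hNdef, Set.mem_toFinset]; exact (h ▸ hadj.symm : G.Adj v₀ a), by rw [h]⟩
      have ha' : a' ≠ v₀ := by
        intro h
        exact hnB'.1 b' ⟨by rw [hNdef, Set.mem_toFinset]; exact h ▸ hadj', by rw [h]⟩
      have hb' : b' ≠ v₀ := by
        intro h
        exact hnB'.2 a' ⟨by rw [hNdef, Set.mem_toFinset]; exact (h ▸ hadj'.symm : G.Adj v₀ a'), by rw [h]⟩
      dsimp only at heq
      rw [dif_neg ha, dif_neg hb, dif_neg ha', dif_neg hb', Prod.mk.injEq] at heq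
      exact Prod.ext (congrArg Subtype.val heq.1) (congrArg Subtype.val heq.2)
  calc DD G = (PP G).card := DD_eq_card_PP G
    _ ≤ (PP G \ B).card + B.card := Finset.card_le_card_sdiff_add_card
    _ ≤ (PP (deleteV G v₀)).card + 2 * N.card := Nat.add_le_add hmain hBcard
    _ = DD (deleteV G v₀) + 2 * (G.neighborSet v₀).ncard := by rw [DD_eq_card_PP, hNcard]

lemma card_deleteV (v₀ : V) : Fintype.card {x : V // x ≠ v₀} = Fintype.card V - 1 := by
  classical
  simp [Fintype.card_subtype_compl]

/-- Deleting one edge. -/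
lemma PP_deleteEdges {u v : V} (huv : G.Adj u v) :
    PP (G.deleteEdges {s(u, v)}) = PP G \ {(u, v), (v, u)} := by
  classical
  ext ⟨a, b⟩
  simp only [mem_PP, Finset.mem_sdiff, Finset.mem_insert, Finset.mem_singleton,
    deleteEdges_adj, Set.mem_singleton_iff, Sym2.eq_iff, Prod.mk.injEq]

lemma DD_deleteEdges {u v : V} (huv : G.Adj u v) :
    DD (G.deleteEdges {s(u, v)}) + 2 = DD G := by
  classical
  rw [DD_eq_card_PP, DD_eq_card_PP, PP_deleteEdges huv]
  have hsub : ({(u, v), (v, u)} : Finset (V × V)) ⊆ PP G := by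
    intro p hp
    simp only [Finset.mem_insert, Finset.mem_singleton] at hp
    rcases hp with rfl | rfl
    · rw [mem_PP]; exact huv
    · rw [mem_PP]; exact huv.symm
  rw [Finset.card_sdiff_of_subset hsub]
  have h2 : ({(u, v), (v, u)} : Finset (V × V)).card = 2 := by
    rw [Finset.card_insert_of_notMem (by simp [Prod.ext_iff, huv.ne]), Finset.card_singleton]
  rw [h2]
  have : 2 ≤ (PP G).card := h2 ▸ Finset.card_le_card hsub
  omega

lemma deleteEdges_minor {u v : V} {W : Type*} {H : SimpleGraph W} :
    IsMinor H (G.deleteEdges {s(u, v)}) → IsMinor H G :=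
  IsMinor.push id Function.injective_id (fun _ _ h => (deleteEdges_adj.1 h).1)

end Delete
section Endgame
variable [Fintype V] {G : SimpleGraph V}

omit [Fintype V] in
lemma clique5 (v0 v1 v2 v3 v4 : V)
    (h01 : G.Adj v0 v1) (h02 : G.Adj v0 v2) (h03 : G.Adj v0 v3) (h04 : G.Adj v0 v4)
    (h12 : G.Adj v1 v2) (h13 : G.Adj v1 v3) (h14 : G.Adj v1 v4)
    (h23 : G.Adj v2 v3) (h24 : G.Adj v2 v4) (h34 : G.Adj v3 v4) :
    IsMinor (⊤ : SimpleGraph (Fin 5)) G := by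
  have h10 := h01.symm; have h20 := h02.symm; have h30 := h03.symm; have h40 := h04.symm
  have h21 := h12.symm; have h31 := h13.symm; have h41 := h14.symm
  have h32 := h23.symm; have h42 := h24.symm; have h43 := h34.symm
  have hadj : ∀ i j : Fin 5, i ≠ j →
      G.Adj (![v0, v1, v2, v3, v4] i) (![v0, v1, v2, v3, v4] j) := by
    intro i j hij
    fin_cases i <;> fin_cases j <;> simp_all
  refine cliqueMinor ![v0, v1, v2, v3, v4] ?_ hadj
  intro i j h
  by_contra hne
  exact (hadj i j hne).ne h

omit [Fintype V] in
lemma contractG_adj_of_adj {u w a b : V} (ha : a ≠ u) (hb : b ≠ u) (h : G.Adj a b) :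
    (contractG G u w).Adj ⟨a, ha⟩ ⟨b, hb⟩ :=
  ⟨fun he => h.ne (congrArg Subtype.val he), Or.inl h⟩

omit [Fintype V] in
lemma contractG_adj_right {u w a : V} (ha : a ≠ u) (hwu : w ≠ u) (h : G.Adj a u)
    (hne : a ≠ w) : (contractG G u w).Adj ⟨a, ha⟩ ⟨w, hwu⟩ :=
  ⟨fun he => hne (congrArg Subtype.val he), Or.inr (Or.inr ⟨rfl, h⟩)⟩

lemma endgame (v : V)
    (hsize : (G.neighborSet v).ncard = 4 ∨ (G.neighborSet v).ncard = 5)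
    (hcom : ∀ u, G.Adj v u → 3 ≤ (G.neighborSet u ∩ G.neighborSet v).ncard) :
    IsMinor (⊤ : SimpleGraph (Fin 5)) G := by
  classical
  set N : Finset V := (G.neighborSet v).toFinset with hNdef
  have hNmem : ∀ u, u ∈ N ↔ G.Adj v u := by
    intro u; rw [hNdef, Set.mem_toFinset]; rfl
  have hNcard : (G.neighborSet v).ncard = N.card := by
    rw [hNdef, Set.ncard_eq_toFinset_card']
  have hvadj : ∀ u ∈ N, G.Adj v u := fun u hu => (hNmem u).1 hu
  have hCsub : ∀ u ∈ N, ((G.neighborSet u ∩ G.neighborSet v).toFinset) ⊆ N.erase u := by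
    intro u hu w hw
    rw [Set.mem_toFinset] at hw
    rw [Finset.mem_erase, hNmem]
    exact ⟨fun h => G.loopless.irrefl u (h ▸ hw.1), hw.2⟩
  have hC3 : ∀ u ∈ N, 3 ≤ ((G.neighborSet u ∩ G.neighborSet v).toFinset).card := by
    intro u hu
    rw [← Set.ncard_eq_toFinset_card']
    exact hcom u ((hNmem u).1 hu)
  have hNc45 : N.card = 4 ∨ N.card = 5 := by
    rcases hsize with h | h
    · exact Or.inl (by omega)
    · exact Or.inr (by omega)
  have hone : ∀ u ∈ N, ∀ w ∈ N, ∀ w' ∈ N, w ≠ u → w' ≠ u → w ≠ w' →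
      ¬ G.Adj u w → G.Adj u w' := by
    intro u hu w hw w' hw' hwu hw'u hww' hnadj
    by_contra hnadj'
    have hsub : (G.neighborSet u ∩ G.neighborSet v).toFinset ⊆
        ((N.erase u).erase w).erase w' := by
      intro z hz
      have hz' := hCsub u hu hz
      rw [Set.mem_toFinset] at hz
      rw [Finset.mem_erase, Finset.mem_erase]
      refine ⟨fun h => hnadj' (h ▸ hz.1), fun h => hnadj (h ▸ hz.1), hz'⟩
    have hcard := Finset.card_le_card hsub
    have e1 : w' ∈ (N.erase u).erase w := by
      rw [Finset.mem_erase, Finset.mem_erase]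
      exact ⟨hww'.symm, hw'u, hw'⟩
    have e2 : w ∈ N.erase u := by rw [Finset.mem_erase]; exact ⟨hwu, hw⟩
    have h1 : (((N.erase u).erase w).erase w').card = N.card - 3 := by
      rw [Finset.card_erase_of_mem e1, Finset.card_erase_of_mem e2,
        Finset.card_erase_of_mem hu]
      omega
    have := hC3 u hu
    rcases hNc45 with h | h <;> omega
  by_cases hex : ∃ x ∈ N, ∃ y ∈ N, x ≠ y ∧ ¬ G.Adj x y
  · obtain ⟨x, hx, y, hy, hxy, hnxy⟩ := hex
    have hall4 : N.card = 4 → ∀ u ∈ N, ∀ w ∈ N, w ≠ u → G.Adj u w := by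
      intro h4 u hu w hw hwu
      have hsub' : (G.neighborSet u ∩ G.neighborSet v).toFinset = N.erase u := by
        apply Finset.eq_of_subset_of_card_le (hCsub u hu)
        rw [Finset.card_erase_of_mem hu, h4]
        exact le_trans (by omega) (hC3 u hu)
      have hmem : w ∈ (G.neighborSet u ∩ G.neighborSet v).toFinset := by
        rw [hsub', Finset.mem_erase]; exact ⟨hwu, hw⟩
      rw [Set.mem_toFinset] at hmem
      exact hmem.1
    have h5 : N.card = 5 := by
      rcases hNc45 with h4 | h5
      · exact absurd (hall4 h4 x hx y hy hxy.symm) hnxy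
      · exact h5
    have hM : ((N.erase x).erase y).card = 3 := by
      rw [Finset.card_erase_of_mem (by rw [Finset.mem_erase]; exact ⟨hxy.symm, hy⟩),
        Finset.card_erase_of_mem hx, h5]
    obtain ⟨p, q, r, hpq, hpr, hqr, hMeq⟩ := Finset.card_eq_three.1 hM
    have hpM : p ∈ (N.erase x).erase y := by rw [hMeq]; simp
    have hqM : q ∈ (N.erase x).erase y := by rw [hMeq]; simp
    have hrM : r ∈ (N.erase x).erase y := by rw [hMeq]; simp
    obtain ⟨hpy, hpx, hpN⟩ : p ≠ y ∧ p ≠ x ∧ p ∈ N := by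
      rw [Finset.mem_erase, Finset.mem_erase] at hpM; exact ⟨hpM.1, hpM.2.1, hpM.2.2⟩
    obtain ⟨hqy, hqx, hqN⟩ : q ≠ y ∧ q ≠ x ∧ q ∈ N := by
      rw [Finset.mem_erase, Finset.mem_erase] at hqM; exact ⟨hqM.1, hqM.2.1, hqM.2.2⟩
    obtain ⟨hry, hrx, hrN⟩ : r ≠ y ∧ r ≠ x ∧ r ∈ N := by
      rw [Finset.mem_erase, Finset.mem_erase] at hrM; exact ⟨hrM.1, hrM.2.1, hrM.2.2⟩
    have hxall : ∀ w ∈ N, w ≠ x → w ≠ y → G.Adj x w := by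
      intro w hw hwx hwy
      exact hone x hx y hy w hw hxy.symm hwx (fun h => hwy h.symm) hnxy
    have hyall : ∀ w ∈ N, w ≠ x → w ≠ y → G.Adj y w := by
      intro w hw hwx hwy
      exact hone y hy x hx w hw hxy hwy (fun h => hwx h.symm) (fun h => hnxy h.symm)
    have build : ∀ p' q' r' : V, p' ∈ N → q' ∈ N → r' ∈ N →
        p' ≠ x → p' ≠ y → q' ≠ x → q' ≠ y → r' ≠ x → r' ≠ y →
        p' ≠ q' → p' ≠ r' → q' ≠ r' → ¬ G.Adj p' q' →
        IsMinor (⊤ : SimpleGraph (Fin 5)) G := by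
      intro p' q' r' hpN' hqN' hrN' hpx' hpy' hqx' hqy' hrx' hry' hpq' hpr' hqr' hnpq'
      have hpall : ∀ w ∈ N, w ≠ p' → w ≠ q' → G.Adj p' w := by
        intro w hw hwp hwq
        exact hone p' hpN' q' hqN' w hw hpq'.symm hwp (fun h => hwq h.symm) hnpq'
      have hq'y : G.Adj q' y := (hyall q' hqN' hqx' hqy').symm
      apply contract_lift hq'y
      -- vertices of the 5-clique in the contraction (everything ≠ q')
      have hvq' : v ≠ q' := fun h => G.loopless.irrefl v (h ▸ hvadj q' hqN')
      have hxq' : x ≠ q' := fun h => hqx' h.symm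
      have hyq' : y ≠ q' := fun h => hqy' h.symm
      have hrq' : r' ≠ q' := fun h => hqr' h.symm
      have hpq'' : p' ≠ q' := hpq'
      refine clique5 (G := contractG G q' y)
        ⟨v, hvq'⟩ ⟨x, hxq'⟩ ⟨p', hpq''⟩ ⟨r', hrq'⟩ ⟨y, hyq'⟩
        ?_ ?_ ?_ ?_ ?_ ?_ ?_ ?_ ?_ ?_
      · exact contractG_adj_of_adj _ _ (hvadj x hx)
      · exact contractG_adj_of_adj _ _ (hvadj p' hpN')
      · exact contractG_adj_of_adj _ _ (hvadj r' hrN')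
      · exact contractG_adj_of_adj _ _ (hvadj y hy)
      · exact contractG_adj_of_adj _ _ (hxall p' hpN' hpx' hpy')
      · exact contractG_adj_of_adj _ _ (hxall r' hrN' hrx' hry')
      · -- x to the merged vertex y: via the edge x–q'
        exact contractG_adj_right _ _ (hxall q' hqN' hqx' hqy') hxy
      · exact contractG_adj_of_adj _ _ (hpall r' hrN' (fun h => hpr' h.symm) hrq')
      · exact contractG_adj_of_adj _ _ (hpall y hy (fun h => hpy' h.symm) hyq')
      · exact contractG_adj_of_adj _ _ ((hyall r' hrN' hrx' hry').symm)
    by_cases h1 : G.Adj p q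
    · by_cases h2 : G.Adj p r
      · by_cases h3 : G.Adj q r
        · exact clique5 v x p q r (hvadj x hx) (hvadj p hpN) (hvadj q hqN) (hvadj r hrN)
            (hxall p hpN hpx hpy) (hxall q hqN hqx hqy) (hxall r hrN hrx hry) h1 h2 h3
        · exact build q r p hqN hrN hpN hqx hqy hrx hry hpx hpy hqr
            (fun h => hpq h.symm) (fun h => hpr h.symm) h3
      · exact build p r q hpN hrN hqN hpx hpy hrx hry hqx hqy hpr hpq
          (fun h => hqr h.symm) h2
    · exact build p q r hpN hqN hrN hpx hpy hqx hqy hrx hry hpq hpr hqr h1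
  · push_neg at hex
    have hall : ∀ u ∈ N, ∀ w ∈ N, u ≠ w → G.Adj u w := by
      intro u hu w hw huw
      by_contra hn
      exact hn (hex u hu w hw huw)
    have h4 : 4 ≤ N.card := by rcases hNc45 with h | h <;> omega
    obtain ⟨a, ha⟩ := Finset.card_pos.1 (by omega : 0 < N.card)
    have h3 : ((N.erase a)).card = N.card - 1 := Finset.card_erase_of_mem ha
    obtain ⟨b, hb⟩ := Finset.card_pos.1 (by omega : 0 < (N.erase a).card)
    have h2 : ((N.erase a).erase b).card = N.card - 2 := by
      rw [Finset.card_erase_of_mem hb, h3]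
      omega
    obtain ⟨c, hc⟩ := Finset.card_pos.1 (by omega : 0 < ((N.erase a).erase b).card)
    have h1 : (((N.erase a).erase b).erase c).card = N.card - 3 := by
      rw [Finset.card_erase_of_mem hc, h2]
      omega
    obtain ⟨d, hd⟩ := Finset.card_pos.1 (by omega : 0 < (((N.erase a).erase b).erase c).card)
    obtain ⟨hdc, hdb, hda, hdN⟩ : d ≠ c ∧ d ≠ b ∧ d ≠ a ∧ d ∈ N := by
      simp only [Finset.mem_erase] at hd; exact ⟨hd.1, hd.2.1, hd.2.2.1, hd.2.2.2⟩
    obtain ⟨hcb, hca, hcN⟩ : c ≠ b ∧ c ≠ a ∧ c ∈ N := by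
      simp only [Finset.mem_erase] at hc; exact ⟨hc.1, hc.2.1, hc.2.2⟩
    obtain ⟨hba, hbN⟩ : b ≠ a ∧ b ∈ N := by
      simp only [Finset.mem_erase] at hb; exact ⟨hb.1, hb.2⟩
    exact clique5 v a b c d (hvadj a ha) (hvadj b hbN) (hvadj c hcN) (hvadj d hdN)
      (hall a ha b hbN hba.symm) (hall a ha c hcN hca.symm) (hall a ha d hdN hda.symm)
      (hall b hbN c hcN hcb.symm) (hall b hbN d hdN hdb.symm) (hall c hcN d hdN hdc.symm)
end Endgame
section Dense

lemma DD_le_sq [Fintype V] (G : SimpleGraph V) :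
    DD G ≤ Fintype.card V * (Fintype.card V - 1) := by
  classical
  unfold DD
  calc ∑ v : V, (G.neighborSet v).ncard ≤ ∑ _v : V, (Fintype.card V - 1) := by
        apply Finset.sum_le_sum
        intro w _
        have hsub : G.neighborSet w ⊆ (Set.univ : Set V) \ {w} := by
          intro z hz
          exact ⟨Set.mem_univ z, fun h => G.loopless.irrefl w (by rw [Set.mem_singleton_iff] at h; exact h ▸ hz)⟩
        have : (G.neighborSet w).ncard ≤ ((Set.univ : Set V) \ {w}).ncard :=
          Set.ncard_le_ncard hsub (Set.toFinite _)
        rwa [Set.ncard_diff_singleton_of_mem (Set.mem_univ w), Set.ncard_univ,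
          Nat.card_eq_fintype_card] at this
    _ = Fintype.card V * (Fintype.card V - 1) := by
        rw [Finset.sum_const, Finset.card_univ, smul_eq_mul]

theorem dense_k5 : ∀ (k : ℕ) (V : Type u) [Fintype V] (G : SimpleGraph V),
    Fintype.card V + DD G ≤ k → 1 ≤ Fintype.card V →
    6 * Fintype.card V ≤ DD G + 4 →
    IsMinor (⊤ : SimpleGraph (Fin 5)) G := by
  intro k
  induction k with
  | zero =>
    intro V _ G hk h1 _
    omega
  | succ k ih =>
    intro V _ G hk h1 hdens
    classical
    have hDsq := DD_le_sq G
    set n := Fintype.card V with hn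
    have hn7 : 7 ≤ n := by
      by_contra h
      interval_cases n <;> omega
    have hnontriv : Nontrivial V := Fintype.one_lt_card_iff_nontrivial.1 (by omega)
    by_cases hc1 : ∃ v₀, (G.neighborSet v₀).ncard ≤ 3
    · obtain ⟨v₀, hv₀⟩ := hc1
      apply deleteV_minor (v₀ := v₀)
      obtain ⟨w₀, hw₀⟩ := exists_ne v₀
      have hcard : Fintype.card {x : V // x ≠ v₀} = n - 1 := card_deleteV v₀
      have hle : DD (deleteV G v₀) ≤ DD G := DD_deleteV_le
      have hge : DD G ≤ DD (deleteV G v₀) + 2 * (G.neighborSet v₀).ncard :=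
        DD_deleteV_ge hw₀
      apply ih
      · omega
      · omega
      · omega
    · push_neg at hc1
      by_cases hc2 : ∃ u' v', G.Adj u' v' ∧ (G.neighborSet u' ∩ G.neighborSet v').ncard ≤ 2
      · obtain ⟨u', v', huv, hcomm⟩ := hc2
        apply contract_lift huv
        have hcard : Fintype.card {x : V // x ≠ u'} = n - 1 := card_deleteV u'
        have hle : DD (contractG G u' v') ≤ DD G := DD_contract_le huv
        have hge := DD_contract_ge huv
        apply ih
        · omega
        · omega
        · omega
      · push_neg at hc2
        by_cases hc3 : ∃ v₀, (G.neighborSet v₀).ncard ≤ 5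
        · obtain ⟨v₀, hv₀⟩ := hc3
          apply endgame v₀
          · have := hc1 v₀
            omega
          · intro u' hu'
            exact hc2 u' v₀ hu'.symm
        · push_neg at hc3
          have hD6 : 6 * n ≤ DD G := by
            unfold DD
            calc 6 * n = ∑ _v : V, 6 := by
                  rw [Finset.sum_const, Finset.card_univ, smul_eq_mul, hn, Nat.mul_comm]
              _ ≤ ∑ v : V, (G.neighborSet v).ncard := by
                  apply Finset.sum_le_sum
                  intro w _
                  exact hc3 w
          -- pick any edge and delete it
          obtain ⟨z⟩ := (Fintype.card_pos_iff.1 (by omega : 0 < n))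
          have hz6 := hc3 z
          have hzne : (G.neighborSet z).Nonempty := by
            apply Set.nonempty_of_ncard_ne_zero
            omega
          obtain ⟨z', hz'⟩ := hzne
          have hadjz : G.Adj z z' := hz'
          apply deleteEdges_minor (u := z) (v := z')
          have hDD := DD_deleteEdges hadjz
          apply ih
          · omega
          · omega
          · omega

end Dense
section CaroWei
variable [Fintype V] [DecidableEq V] {G : SimpleGraph V} [DecidableRel G.Adj]

/-- weight function for the restricted Caro–Wei bound -/
noncomputable def cwW (d : ℕ) : ℚ := if d ≤ 11 then ((d : ℚ) + 1)⁻¹ else 0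

lemma cwW_nonneg (d : ℕ) : 0 ≤ cwW d := by
  unfold cwW
  split_ifs
  · positivity
  · exact le_refl 0

lemma cwW_le (d : ℕ) : cwW d ≤ ((d : ℚ) + 1)⁻¹ := by
  unfold cwW
  split_ifs
  · exact le_refl _
  · positivity

lemma caro_wei : ∀ (k : ℕ) (s : Finset V) (c : V → ℕ), s.card ≤ k →
    (∀ v ∈ s, ((G.neighborFinset v) ∩ s).card ≤ c v) →
    ∃ I : Finset V, I ⊆ s ∧ (∀ u ∈ I, ∀ v ∈ I, ¬ G.Adj u v) ∧
      (∀ v ∈ I, c v ≤ 11) ∧ ∑ v ∈ s, cwW (c v) ≤ (I.card : ℚ) := by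
  classical
  intro k
  induction k with
  | zero =>
    intro s c hk _
    have : s = ∅ := Finset.card_eq_zero.1 (by omega)
    subst this
    exact ⟨∅, Finset.Subset.refl _, by simp, by simp, by simp⟩
  | succ k ih =>
    intro s c hk hc
    rcases Finset.eq_empty_or_nonempty s with rfl | hne
    · exact ⟨∅, Finset.Subset.refl _, by simp, by simp, by simp⟩
    obtain ⟨v, hv, hmin⟩ := Finset.exists_min_image s c hne
    by_cases h12 : 12 ≤ c v
    · refine ⟨∅, by simp, by simp, by simp, ?_⟩
      have : ∀ u ∈ s, cwW (c u) = 0 := by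
        intro u hu
        unfold cwW
        rw [if_neg (by have := hmin u hu; omega)]
      rw [Finset.sum_congr rfl this]
      simp
    · push_neg at h12
      set B : Finset V := insert v (G.neighborFinset v) with hBdef
      set s' : Finset V := s \ B with hs'def
      have hs'sub : s' ⊆ s := Finset.sdiff_subset
      have hvB : v ∈ B := Finset.mem_insert_self _ _
      have hvs' : v ∉ s' := fun h => (Finset.mem_sdiff.1 h).2 hvB
      have hcard' : s'.card ≤ k := by
        have h1 : s'.card < s.card := Finset.card_lt_card ⟨hs'sub, fun h => hvs' (h hv)⟩
        omega
      have hc' : ∀ u ∈ s', ((G.neighborFinset u) ∩ s').card ≤ c u := by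
        intro u hu
        refine le_trans (Finset.card_le_card ?_) (hc u (hs'sub hu))
        exact Finset.inter_subset_inter (Finset.Subset.refl _) hs'sub
      obtain ⟨I', hI'sub, hI'ind, hI'11, hI'sum⟩ := ih s' c hcard' hc'
      refine ⟨insert v I', ?_, ?_, ?_, ?_⟩
      · intro z hz
        rcases Finset.mem_insert.1 hz with rfl | hz'
        · exact hv
        · exact hs'sub (hI'sub hz')
      · intro a ha b hb
        rcases Finset.mem_insert.1 ha with rfl | ha' <;>
          rcases Finset.mem_insert.1 hb with rfl | hb'
        · intro h; exact G.loopless.irrefl _ h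
        · intro hab
          have : b ∈ s' := hI'sub hb'
          have hbB : b ∉ B := (Finset.mem_sdiff.1 this).2
          exact hbB (Finset.mem_insert_of_mem (by rw [mem_neighborFinset]; exact hab))
        · intro hab
          have : a ∈ s' := hI'sub ha'
          have haB : a ∉ B := (Finset.mem_sdiff.1 this).2
          exact haB (Finset.mem_insert_of_mem (by rw [mem_neighborFinset]; exact hab.symm))
        · exact hI'ind a ha' b hb'
      · intro z hz
        rcases Finset.mem_insert.1 hz with rfl | hz'
        · omega
        · exact hI'11 z hz'
      · have hsplit : ∑ z ∈ s, cwW (c z) = ∑ z ∈ s ∩ B, cwW (c z) + ∑ z ∈ s', cwW (c z) := by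
          rw [hs'def, Finset.sum_inter_add_sum_sdiff]
        have hinterB : ∑ z ∈ s ∩ B, cwW (c z) ≤ 1 := by
          have hbound : ∀ z ∈ s ∩ B, cwW (c z) ≤ ((c v : ℚ) + 1)⁻¹ := by
            intro z hz
            refine le_trans (cwW_le (c z)) ?_
            have hmz := hmin z (Finset.mem_of_mem_inter_left hz)
            apply inv_anti₀
            · positivity
            · have h' : c v + 1 ≤ c z + 1 := by omega
              exact_mod_cast h'
          calc ∑ z ∈ s ∩ B, cwW (c z) ≤ (s ∩ B).card • ((c v : ℚ) + 1)⁻¹ :=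
                Finset.sum_le_card_nsmul _ _ _ hbound
            _ ≤ ((c v : ℚ) + 1) * ((c v : ℚ) + 1)⁻¹ := by
                rw [nsmul_eq_mul]
                apply mul_le_mul_of_nonneg_right _ (by positivity)
                have hcardB : (s ∩ B).card ≤ c v + 1 := by
                  calc (s ∩ B).card ≤ (insert v ((G.neighborFinset v) ∩ s)).card := by
                        apply Finset.card_le_card
                        intro z hz
                        obtain ⟨hzs, hzB⟩ := Finset.mem_inter.1 hz
                        rcases Finset.mem_insert.1 hzB with rfl | hzN
                        · exact Finset.mem_insert_self _ _
                        · exact Finset.mem_insert_of_mem (Finset.mem_inter.2 ⟨hzN, hzs⟩)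
                    _ ≤ ((G.neighborFinset v) ∩ s).card + 1 :=
                        Finset.card_insert_le _ _
                    _ ≤ c v + 1 := by have := hc v hv; omega
                push_cast
                exact_mod_cast (by exact_mod_cast hcardB : ((s ∩ B).card : ℚ) ≤ (c v : ℚ) + 1)
            _ = 1 := mul_inv_cancel₀ (by positivity)
        have hins : (insert v I').card = I'.card + 1 :=
          Finset.card_insert_of_notMem (fun h => hvs' (hI'sub h))
        rw [hsplit, hins]
        push_cast
        linarith
end CaroWei
lemma cwW_ge_lin (d : ℕ) : ((12 : ℚ) - d) / 48 ≤ cwW d := by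
  unfold cwW
  split_ifs with h
  · interval_cases d <;> norm_num
  · have h12 : (12 : ℚ) ≤ d := by exact_mod_cast (by omega : 12 ≤ d)
    have hnp : (12 : ℚ) - d ≤ 0 := by linarith
    have := div_nonpos_of_nonpos_of_nonneg hnp (by norm_num : (0:ℚ) ≤ 48)
    exact this

lemma DD_eq_sum_degree [Fintype V] (G : SimpleGraph V) [DecidableRel G.Adj] :
    DD G = ∑ v, G.degree v := by
  unfold DD
  refine Finset.sum_congr rfl fun v _ => ?_
  rw [Set.ncard_eq_toFinset_card', ← neighborFinset_def]
  rfl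
end Main

/-- every planar graph on `n ≥ 1` vertices contains an independent
set `I` of size at least `n/8` all of whose vertices have degree less than 12. -/
theorem planar_independent_low_degree {V : Type*} [Fintype V] [Nonempty V]
    (G : SimpleGraph V) [DecidableRel G.Adj] (hG : IsPlanar G) :
    ∃ I : Finset V,
      (∀ u ∈ I, ∀ v ∈ I, ¬ G.Adj u v) ∧
      (∀ v ∈ I, G.degree v < 12) ∧
      Fintype.card V ≤ 8 * I.card := by
  classical
  set n := Fintype.card V with hn
  have hpos : 1 ≤ n := Fintype.card_pos
  -- the density bound from K₅-minor-freeness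
  have hdd : DD G + 5 ≤ 6 * n := by
    by_contra h
    exact hG.1 (dense_k5 (n + DD G) V G le_rfl hpos (by omega))
  -- Caro–Wei
  obtain ⟨I, hIsub, hind, h11, hsum⟩ := caro_wei (G := G) (Fintype.card V) Finset.univ
    (fun v => G.degree v) le_rfl
    (fun v _ => by rw [Finset.inter_univ]; rfl)
  refine ⟨I, hind, fun v hv => by have := h11 v hv; omega, ?_⟩
  -- the counting
  have hptw : ∑ v : V, ((12 : ℚ) - G.degree v) / 48 ≤ ∑ v : V, cwW (G.degree v) :=
    Finset.sum_le_sum (fun v _ => cwW_ge_lin (G.degree v))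
  have hDDsum : (DD G : ℚ) = ∑ v : V, (G.degree v : ℚ) := by
    rw [DD_eq_sum_degree]
    push_cast
    rfl
  have hsum2 : ∑ v : V, ((12 : ℚ) - G.degree v) / 48 = ((12 * n : ℚ) - DD G) / 48 := by
    rw [← Finset.sum_div]
    congr 1
    rw [Finset.sum_sub_distrib, Finset.sum_const, Finset.card_univ, hDDsum]
    push_cast
    ring
  have hchain : ((12 * n : ℚ) - DD G) / 48 ≤ (I.card : ℚ) := by
    rw [← hsum2]
    exact le_trans hptw hsum
  have h48 : (12 * n : ℚ) - DD G ≤ 48 * I.card := by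
    rw [div_le_iff₀ (by norm_num : (0:ℚ) < 48)] at hchain
    linarith
  have hDDq : (DD G : ℚ) ≤ 6 * n - 5 := by
    have : (DD G + 5 : ℚ) ≤ 6 * n := by exact_mod_cast hdd
    linarith
  have hfin : ((6 * n + 5 : ℕ) : ℚ) ≤ ((48 * I.card : ℕ) : ℚ) := by
    push_cast
    linarith
  have : 6 * n + 5 ≤ 48 * I.card := by exact_mod_cast hfin
  omega
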